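/- Define ζ(x) = x - √(x² - 1) for x ≥ 1, and with σ_n, v_n(x) as above, let f_n(x) = Σ_{k=1}^{n} (σ_{k+1} - σ_{k-1})·v_k(x)·ζ(x)^k. Then for every x ≥ 1 the limit f(x) = lim_{n→∞} f_n(x) exists and is finite; moreover, if (v_n(x)) is eventually positive then f(x) ≤ 1, and if eventually negative then f(x) ≥ 1. -/

import Mathlib

open Filter


lemma no_neg_drift (u : ℕ → ℝ) (c : ℝ) (hc : c < 0) (N : ℕ)
    (hstep : ∀ n, N ≤ n → u (n + 1) ≤ u n + c)
    (hpos : ∀ n, N ≤ n → 0 ≤ u n) : False := by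
  have key : ∀ j : ℕ, u (N + j) ≤ u N + j * c := by
    intro j
    induction j with
    | zero => simp
    | succ j ih =>
      have h := hstep (N + j) (Nat.le_add_right _ _)
      push_cast
      calc u (N + (j + 1)) = u ((N + j) + 1) := by ring_nf
        _ ≤ u (N + j) + c := h
        _ ≤ u N + j * c + c := by linarith
        _ = u N + (j + 1) * c := by ring
  obtain ⟨j, hj⟩ := exists_nat_gt (u N / (-c))
  have h1 : 0 ≤ u (N + j) := hpos _ (Nat.le_add_right _ _)
  have h2 := key j
  have h3 : u N < j * (-c) := (div_lt_iff₀ (by linarith)).1 hj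
  linarith

lemma growth_bound (z : ℝ) (hz0 : 0 ≤ z) (hz1 : z ≤ 1)
    (ε : ℕ → ℝ) (hε : ∀ k, 0 ≤ ε k)
    (u : ℕ → ℝ) (hu0 : u 0 = 0) (hu1 : |u 1| ≤ 1)
    (hrec : ∀ n, u (n + 2) - u (n + 1) = z ^ 2 * (u (n + 1) - u n) - ε (n + 1) * z * u (n + 1))
    (B : ℝ) (hB : ∀ n : ℕ, (∑ k ∈ Finset.Icc 1 n, ((k : ℝ) + 1) * ε k) ≤ B) :
    ∀ n, |u n| ≤ ((n : ℝ) + 1) * Real.exp B := by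
  set S : ℕ → ℝ := fun n => ∑ k ∈ Finset.Icc 1 n, ((k : ℝ) + 1) * ε k with hS
  have hS0 : S 0 = 0 := by simp [hS]
  have hSsucc : ∀ n, S (n + 1) = S n + ((n : ℝ) + 2) * ε (n + 1) := by
    intro n
    simp only [hS]
    rw [Finset.sum_Icc_succ_top (by omega)]
    push_cast
    ring
  have hSnn : ∀ n, 0 ≤ S n := by
    intro n
    apply Finset.sum_nonneg
    intro k hk
    have := hε k
    positivity
  have hSmono : ∀ n, S n ≤ S (n + 1) := by
    intro n
    rw [hSsucc n]
    have h1 := hε (n + 1)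
    nlinarith
  have hexp : ∀ n, (0:ℝ) < Real.exp (S n) := fun n => Real.exp_pos _
  have hpair : ∀ n, |u (n + 1)| ≤ ((n : ℝ) + 2) * Real.exp (S n) ∧
      |u (n + 2) - u (n + 1)| ≤ Real.exp (S (n + 1)) := by
    intro n
    induction n with
    | zero =>
      constructor
      · rw [hS0, Real.exp_zero]
        calc |u 1| ≤ 1 := hu1
          _ ≤ ((0:ℕ) : ℝ) + 2 := by push_cast; norm_num
          _ = (((0:ℕ) : ℝ) + 2) * 1 := by ring
      · have h := hrec 0
        rw [hu0] at h
        have hb : |u 2 - u 1| ≤ 1 + 2 * ε 1 := by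
          rw [h]
          have h1 : |z ^ 2 * (u 1 - 0) - ε 1 * z * u 1| ≤ |z ^ 2 * (u 1 - 0)| + |ε 1 * z * u 1| :=
            abs_sub _ _
          have h2 : |z ^ 2 * (u 1 - 0)| ≤ 1 := by
            rw [abs_mul]
            have : |z ^ 2| ≤ 1 := by rw [abs_of_nonneg (by positivity)]; nlinarith
            have : |u 1 - 0| ≤ 1 := by simpa using hu1
            nlinarith [abs_nonneg (z^2), abs_nonneg (u 1 - 0)]
          have h3 : |ε 1 * z * u 1| ≤ 2 * ε 1 := by
            rw [abs_mul, abs_mul, abs_of_nonneg (hε 1), abs_of_nonneg hz0]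
            have hzu : z * |u 1| ≤ 1 := by nlinarith [abs_nonneg (u 1)]
            nlinarith [hε 1]
          linarith
        calc |u 2 - u 1| ≤ 1 + 2 * ε 1 := hb
          _ ≤ Real.exp (2 * ε 1) := by
              nlinarith [Real.add_one_le_exp (2 * ε 1), hε 1]
          _ = Real.exp (S 1) := by rw [hSsucc 0, hS0]; norm_num
    | succ n ih =>
      obtain ⟨ih1, ih2⟩ := ih
      have ha : |u (n + 2)| ≤ ((n : ℝ) + 3) * Real.exp (S (n + 1)) := by
        have h1 : |u (n + 2)| ≤ |u (n + 1)| + |u (n + 2) - u (n + 1)| := by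
          have := abs_add_le (u (n + 1)) (u (n + 2) - u (n + 1))
          simpa using this
        have h2 : ((n : ℝ) + 2) * Real.exp (S n) ≤ ((n : ℝ) + 2) * Real.exp (S (n + 1)) := by
          have := Real.exp_le_exp.2 (hSmono n)
          nlinarith
        calc |u (n + 2)| ≤ |u (n + 1)| + |u (n + 2) - u (n + 1)| := h1
          _ ≤ ((n : ℝ) + 2) * Real.exp (S n) + Real.exp (S (n + 1)) := by linarith
          _ ≤ ((n : ℝ) + 3) * Real.exp (S (n + 1)) := by linarith
      constructor
      · convert ha using 2
        push_cast
        ring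
      · have h := hrec (n + 1)
        have hd : |u (n + 3) - u (n + 2)| ≤ |u (n + 2) - u (n + 1)| + ε (n + 2) * |u (n + 2)| := by
          have h1 : u (n + 3) - u (n + 2) = z ^ 2 * (u (n + 2) - u (n + 1)) - ε (n + 2) * z * u (n + 2) := by
            convert h using 3 <;> omega
          rw [h1]
          have h2 := abs_sub (z ^ 2 * (u (n + 2) - u (n + 1))) (ε (n + 2) * z * u (n + 2))
          have h3 : |z ^ 2 * (u (n + 2) - u (n + 1))| ≤ |u (n + 2) - u (n + 1)| := by
            rw [abs_mul, abs_of_nonneg (by positivity : (0:ℝ) ≤ z ^ 2)]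
            have hzsq : z ^ 2 ≤ 1 := by nlinarith
            nlinarith [mul_le_mul_of_nonneg_right hzsq (abs_nonneg (u (n + 2) - u (n + 1)))]
          have h4 : |ε (n + 2) * z * u (n + 2)| ≤ ε (n + 2) * |u (n + 2)| := by
            rw [abs_mul, abs_mul, abs_of_nonneg (hε (n + 2)), abs_of_nonneg hz0]
            have hzu : z * |u (n + 2)| ≤ |u (n + 2)| := by
              nlinarith [mul_le_mul_of_nonneg_right hz1 (abs_nonneg (u (n + 2)))]
            nlinarith [hε (n + 2)]
          linarith
        have hfin : |u (n + 3) - u (n + 2)| ≤ Real.exp (S (n + 1)) * (1 + ((n : ℝ) + 3) * ε (n + 2)) := by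
          calc |u (n + 3) - u (n + 2)| ≤ |u (n + 2) - u (n + 1)| + ε (n + 2) * |u (n + 2)| := hd
            _ ≤ Real.exp (S (n + 1)) + ε (n + 2) * (((n : ℝ) + 3) * Real.exp (S (n + 1))) := by
                have := mul_le_mul_of_nonneg_left ha (hε (n + 2))
                linarith
            _ = Real.exp (S (n + 1)) * (1 + ((n : ℝ) + 3) * ε (n + 2)) := by ring
        calc |u (n + 3) - u (n + 2)| ≤ Real.exp (S (n + 1)) * (1 + ((n : ℝ) + 3) * ε (n + 2)) := hfin
          _ ≤ Real.exp (S (n + 1)) * Real.exp (((n : ℝ) + 3) * ε (n + 2)) := by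
              have h1 : (1 : ℝ) + ((n : ℝ) + 3) * ε (n + 2) ≤ Real.exp (((n : ℝ) + 3) * ε (n + 2)) := by
                have := Real.add_one_le_exp (((n : ℝ) + 3) * ε (n + 2))
                linarith
              nlinarith [hexp (n + 1)]
          _ = Real.exp (S (n + 2)) := by
              rw [← Real.exp_add, hSsucc (n + 1)]
              push_cast
              ring_nf
  intro n
  match n with
  | 0 => rw [hu0]; simp; positivity
  | (m + 1) =>
    have h1 := (hpair m).1
    have h2 : Real.exp (S m) ≤ Real.exp B := Real.exp_le_exp.2 (hB m)
    have : ((m : ℝ) + 2) * Real.exp (S m) ≤ ((m : ℝ) + 2) * Real.exp B := by nlinarith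
    push_cast
    linarith

set_option maxHeartbeats 2000000 in
theorem f_limit_exists_and_bounds
    (q₀ α x₀ : ℝ) (hq1 : 1 / 2 < q₀) (hq2 : q₀ < 1)
    (hα1 : 1 - q₀ < α) (hα2 : α < q₀)
    (hx : x₀ = 1 / (2 * Real.sqrt (q₀ * (1 - q₀))))
    (σ : ℕ → ℝ)
    (hσ0 : σ 0 = 2 * x₀ * α) (hσ : ∀ n, σ (n + 1) = 2 * x₀ - 1 / σ n)
    (v : ℝ → ℕ → ℝ)
    (hv0 : ∀ x, v x 0 = 0) (hv1 : ∀ x, v x 1 = 1)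
    (hvr : ∀ x, ∀ n, 1 ≤ n →
      v x (n + 1) = (2 * x - σ (n + 1) + σ (n - 1)) * v x n - v x (n - 1))
    (ζ : ℝ → ℝ) (hζ : ∀ x, ζ x = x - Real.sqrt (x ^ 2 - 1))
    (f : ℝ → ℕ → ℝ)
    (hf : ∀ x n, f x n =
      ∑ k ∈ Finset.Icc 1 n, (σ (k + 1) - σ (k - 1)) * v x k * ζ x ^ k) :
    ∀ x : ℝ, 1 ≤ x → ∃ L : ℝ, Tendsto (f x) atTop (nhds L) ∧
      ((∃ m : ℕ, ∀ n, m ≤ n → 0 < v x n) → L ≤ 1) ∧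
      ((∃ m : ℕ, ∀ n, m ≤ n → v x n < 0) → 1 ≤ L) := by
  intro x hx1
  -- basic positivity facts
  have hq0 : (0:ℝ) < q₀ := by linarith
  have h1q : (0:ℝ) < 1 - q₀ := by linarith
  have hα0 : (0:ℝ) < α := by linarith
  have hqq : (0:ℝ) < q₀ * (1 - q₀) := by positivity
  have hsqrtpos : 0 < Real.sqrt (q₀ * (1 - q₀)) := Real.sqrt_pos.2 hqq
  have hx0 : 0 < x₀ := by rw [hx]; positivity
  have hx0sq : x₀ ^ 2 * (4 * (q₀ * (1 - q₀))) = 1 := by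
    have hs := Real.sq_sqrt hqq.le
    rw [hx, div_pow, one_pow, mul_pow, hs]
    field_simp
    ring
  -- facts about z = ζ x
  obtain ⟨z, hzdef⟩ : ∃ z : ℝ, z = ζ x := ⟨_, rfl⟩
  have hz : z = x - Real.sqrt (x ^ 2 - 1) := by rw [hzdef]; exact hζ x
  have hx2 : (0:ℝ) ≤ x ^ 2 - 1 := by nlinarith [mul_le_mul hx1 hx1 zero_le_one (by linarith : (0:ℝ) ≤ x)]
  have hzpos : 0 < z := by
    rw [hz]
    have h : Real.sqrt (x ^ 2 - 1) < x := by
      rw [Real.sqrt_lt' (by linarith : (0:ℝ) < x)]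
      linarith
    linarith
  have hzle : z ≤ 1 := by
    rw [hz]
    nlinarith [Real.sq_sqrt hx2, Real.sqrt_nonneg (x ^ 2 - 1), hx1]
  have hz2 : z ^ 2 + 1 = 2 * x * z := by
    rw [hz]
    linear_combination Real.sq_sqrt hx2
  -- facts about σ
  obtain ⟨s, hsdef⟩ : ∃ s : ℝ, s = 2 * x₀ * q₀ := ⟨_, rfl⟩
  have hspos : 0 < s := by rw [hsdef]; positivity
  have hsfix : s ^ 2 - 2 * x₀ * s + 1 = 0 := by
    rw [hsdef]; linear_combination -hx0sq
  have hσ0pos : 0 < σ 0 := by rw [hσ0]; positivity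
  have hσ0lt : σ 0 < s := by
    rw [hσ0, hsdef]
    have := mul_pos hx0 (show (0:ℝ) < q₀ - α by linarith)
    nlinarith [this]
  have hsσ0 : 1 < s * σ 0 := by
    rw [hσ0, hsdef]
    nlinarith [hx0sq, mul_pos (mul_pos hx0 hx0) (mul_pos hq0 (show (0:ℝ) < α - (1 - q₀) by linarith))]
  have h2xs : 2 * x₀ - s = 1 / s := by
    field_simp
    linarith [hsfix]
  have hkey : ∀ t : ℝ, σ 0 ≤ t → t < s → t ^ 2 - 2 * x₀ * t + 1 < 0 := by
    intro t h1 h2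
    have hst : 1 < s * t := by
      have h5 := mul_le_mul_of_nonneg_left h1 hspos.le
      linarith
    have hP : 0 < (s - t) * (s * t - 1) := mul_pos (by linarith) (by linarith)
    have h3 : s * (t ^ 2 - 2 * x₀ * t + 1) =
        -((s - t) * (s * t - 1)) + t * (s ^ 2 - 2 * x₀ * s + 1) := by ring
    have h4 : s * (t ^ 2 - 2 * x₀ * t + 1) < 0 := by rw [h3, hsfix]; linarith
    by_contra hcon
    push_neg at hcon
    have := mul_nonneg hspos.le hcon
    linarith
  have hinv : ∀ n, σ 0 ≤ σ n ∧ σ n < s := by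
    intro n
    induction n with
    | zero => exact ⟨le_refl _, hσ0lt⟩
    | succ n ih =>
      obtain ⟨h1, h2⟩ := ih
      have hσnpos : 0 < σ n := lt_of_lt_of_le hσ0pos h1
      constructor
      · rw [hσ n]
        have ha : 1 / σ n ≤ 1 / σ 0 := one_div_le_one_div_of_le hσ0pos h1
        have hb : 1 / σ 0 < 2 * x₀ - σ 0 := by
          rw [div_lt_iff₀ hσ0pos]
          nlinarith [hkey (σ 0) le_rfl hσ0lt]
        linarith
      · rw [hσ n]
        have ha : 1 / s < 1 / σ n := one_div_lt_one_div_of_lt hσnpos h2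
        linarith [h2xs]
  have hσpos : ∀ n, 0 < σ n := fun n => lt_of_lt_of_le hσ0pos (hinv n).1
  have hmono : ∀ n, σ n < σ (n + 1) := by
    intro n
    rw [hσ n]
    have h1 := (hinv n).1
    have h2 := (hinv n).2
    have hσnpos := hσpos n
    have hb : 1 / σ n < 2 * x₀ - σ n := by
      rw [div_lt_iff₀ hσnpos]
      have hk2 := hkey (σ n) h1 h2
      nlinarith [hk2]
    linarith
  have hεpos : ∀ k : ℕ, 1 ≤ k → 0 < σ (k + 1) - σ (k - 1) := by
    intro k hk
    have h1 := hmono (k - 1)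
    have h2 := hmono k
    have e : k - 1 + 1 = k := by omega
    rw [e] at h1
    linarith
  -- geometric decay of s - σ n
  obtain ⟨r, hrdef⟩ : ∃ r : ℝ, r = (1 - q₀) / α := ⟨_, rfl⟩
  have hr0 : 0 < r := by rw [hrdef]; positivity
  have hr1 : r < 1 := by rw [hrdef]; exact (div_lt_one hα0).2 (by linarith)
  have hrsσ : 1 ≤ r * (s * σ 0) := by
    rw [hrdef, hσ0, hsdef]
    rw [div_mul_eq_mul_div, le_div_iff₀ hα0]
    have h : x₀ ^ 2 * (4 * (q₀ * (1 - q₀))) * α = 1 * α := by rw [hx0sq]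
    nlinarith [h]
  have hδstep : ∀ n, s - σ (n + 1) ≤ r * (s - σ n) := by
    intro n
    have h1 := (hinv n).1
    have h2 := (hinv n).2
    have hσnpos := hσpos n
    rw [hσ n]
    have e1 : s - (2 * x₀ - 1 / σ n) = 1 / σ n - 1 / s := by
      have := h2xs
      linarith
    rw [e1]
    have e2 : 1 / σ n - 1 / s = (s - σ n) / (s * σ n) := by
      field_simp
    rw [e2, div_le_iff₀ (mul_pos hspos hσnpos)]
    have hA : 1 ≤ r * (s * σ n) := by
      have h5 : 0 ≤ s * (σ n - σ 0) := mul_nonneg hspos.le (by linarith)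
      have h6 : 0 ≤ r * (s * (σ n - σ 0)) := mul_nonneg hr0.le h5
      nlinarith [hrsσ, h6]
    nlinarith [mul_le_mul_of_nonneg_left hA (sub_nonneg.2 h2.le)]
  have hδn : ∀ n, s - σ n ≤ (s - σ 0) * r ^ n := by
    intro n
    induction n with
    | zero => simp
    | succ n ih =>
      calc s - σ (n + 1) ≤ r * (s - σ n) := hδstep n
        _ ≤ r * ((s - σ 0) * r ^ n) := mul_le_mul_of_nonneg_left ih hr0.le
        _ = (s - σ 0) * r ^ (n + 1) := by ring
  obtain ⟨C, hCdef⟩ : ∃ C : ℝ, C = (s - σ 0) / r := ⟨_, rfl⟩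
  have hC0 : 0 < C := by
    rw [hCdef]
    apply div_pos _ hr0
    linarith [hσ0lt]
  have hCbound : ∀ k : ℕ, 1 ≤ k → σ (k + 1) - σ (k - 1) ≤ C * r ^ k := by
    intro k hk
    obtain ⟨m, rfl⟩ := Nat.exists_eq_add_of_le hk
    have h0 : 1 + m - 1 = m := by omega
    rw [h0]
    have h1 : σ (1 + m + 1) ≤ s := (hinv (1 + m + 1)).2.le
    have h2 : s - σ m ≤ (s - σ 0) * r ^ m := hδn m
    have h3 : C * r ^ (1 + m) = (s - σ 0) * r ^ m := by
      rw [hCdef]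
      field_simp
      ring
    rw [h3]
    linarith
  -- summability of the comparison series
  have hsummable1 : Summable (fun k : ℕ => ((k : ℝ) + 1) * r ^ k) := by
    have h1 : Summable (fun k : ℕ => (k : ℝ) * r ^ k) := by
      have := summable_pow_mul_geometric_of_norm_lt_one 1
        (show ‖r‖ < 1 by rw [Real.norm_eq_abs, abs_of_nonneg hr0.le]; exact hr1)
      simpa using this
    have h2 : Summable (fun k : ℕ => r ^ k) := summable_geometric_of_lt_one hr0.le hr1
    have h3 := h1.add h2
    apply h3.congr
    intro k
    ring
  obtain ⟨B, hBdef⟩ : ∃ B : ℝ, B = C * ∑' k : ℕ, ((k : ℝ) + 1) * r ^ k := ⟨_, rfl⟩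
  have hSB : ∀ n : ℕ, (∑ k ∈ Finset.Icc 1 n, ((k : ℝ) + 1) * (σ (k + 1) - σ (k - 1))) ≤ B := by
    intro n
    have h1 : (∑ k ∈ Finset.Icc 1 n, ((k : ℝ) + 1) * (σ (k + 1) - σ (k - 1)))
        ≤ ∑ k ∈ Finset.Icc 1 n, C * (((k : ℝ) + 1) * r ^ k) := by
      apply Finset.sum_le_sum
      intro k hk
      have hk1 : 1 ≤ k := (Finset.mem_Icc.1 hk).1
      have h5 := hCbound k hk1
      have hknn : (0:ℝ) ≤ (k : ℝ) + 1 := by positivity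
      linarith [mul_le_mul_of_nonneg_left h5 hknn]
    have h2 : (∑ k ∈ Finset.Icc 1 n, C * (((k : ℝ) + 1) * r ^ k))
        = C * ∑ k ∈ Finset.Icc 1 n, (((k : ℝ) + 1) * r ^ k) := by rw [Finset.mul_sum]
    have h3 : (∑ k ∈ Finset.Icc 1 n, (((k : ℝ) + 1) * r ^ k))
        ≤ ∑' k : ℕ, ((k : ℝ) + 1) * r ^ k := by
      apply Summable.sum_le_tsum
      · intro k _
        positivity
      · exact hsummable1
    have h4 := mul_le_mul_of_nonneg_left h3 hC0.le
    rw [hBdef]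
    linarith
  -- the sequence u n = v x n * z ^ n and its growth bound
  obtain ⟨u, hudef⟩ : ∃ u : ℕ → ℝ, u = fun n => v x n * z ^ n := ⟨_, rfl⟩
  have hun : ∀ n, u n = v x n * z ^ n := fun n => by rw [hudef]
  have huu0 : u 0 = 0 := by rw [hun, hv0]; ring
  have huu1 : u 1 = z := by rw [hun, hv1]; ring
  have hεnn : ∀ k : ℕ, 0 ≤ σ (k + 1) - σ (k - 1) := by
    intro k
    rcases Nat.eq_zero_or_pos k with hk | hk
    · subst hk
      simp only [Nat.zero_sub]
      exact (by linarith [hmono 0] : (0:ℝ) ≤ σ (0 + 1) - σ 0)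
    · exact (hεpos k hk).le
  have hurec : ∀ n : ℕ, u (n + 2) - u (n + 1) =
      z ^ 2 * (u (n + 1) - u n) - (σ (n + 1 + 1) - σ (n + 1 - 1)) * z * u (n + 1) := by
    intro n
    have hv2 : v x (n + 2) = (2 * x - σ (n + 2) + σ n) * v x (n + 1) - v x n := by
      have h := hvr x (n + 1) (by omega)
      simpa using h
    have he : n + 1 - 1 = n := by omega
    rw [he, hun, hun, hun, hv2, pow_succ, pow_succ]
    linear_combination (-(v x (n + 1) * z ^ n * z)) * hz2
  obtain ⟨E, hEdef⟩ : ∃ E : ℝ, E = Real.exp B := ⟨_, rfl⟩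
  have hEpos : 0 < E := by rw [hEdef]; exact Real.exp_pos _
  have hubound : ∀ n, |u n| ≤ ((n : ℝ) + 1) * E := by
    have h := growth_bound z hzpos.le hzle (fun k => σ (k + 1) - σ (k - 1)) hεnn u huu0
      (by rw [huu1, abs_of_nonneg hzpos.le]; exact hzle) hurec B hSB
    intro n
    rw [hEdef]
    exact h n
  -- the key identity  1 - f_n = v_{n+1} z^n - v_n z^{n+1}
  have hid : ∀ n : ℕ, 1 - f x n = v x (n + 1) * z ^ n - v x n * z ^ (n + 1) := by
    intro n
    induction n with
    | zero =>
      have h0 : f x 0 = 0 := by rw [hf]; simp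
      rw [h0, hv1 x, hv0 x]
      simp
    | succ n ih =>
      have hs1 : f x (n + 1) = f x n + (σ (n + 2) - σ n) * v x (n + 1) * z ^ (n + 1) := by
        rw [hf, hf, Finset.sum_Icc_succ_top (by omega : (1:ℕ) ≤ n + 1)]
        rw [← hzdef]
        simp
      have hv2 : v x (n + 2) = (2 * x - σ (n + 2) + σ n) * v x (n + 1) - v x n := by
        have h := hvr x (n + 1) (by omega)
        simpa using h
      rw [hs1, hv2, pow_succ, pow_succ]
      linear_combination ih + (v x (n + 1) * z ^ n) * hz2
  -- convergence
  obtain ⟨g, hgdef⟩ : ∃ g : ℕ → ℝ, g = fun k => (σ (k + 1) - σ (k - 1)) * v x k * z ^ k := ⟨_, rfl⟩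
  have hgn : ∀ k, g k = (σ (k + 1) - σ (k - 1)) * v x k * z ^ k := fun k => by rw [hgdef]
  have hfg : ∀ n, f x n = ∑ k ∈ Finset.Icc 1 n, g k := by
    intro n
    rw [hf]
    apply Finset.sum_congr rfl
    intro k _
    rw [hgn, hzdef]
  have hg0 : g 0 = 0 := by rw [hgn, hv0]; ring
  have hgabs : ∀ k, |g k| ≤ (C * E) * (((k : ℝ) + 1) * r ^ k) := by
    intro k
    rcases Nat.eq_zero_or_pos k with hk | hk
    · subst hk
      rw [hg0, abs_zero]
      positivity
    · have hk1 : 1 ≤ k := hk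
      have h1 : g k = (σ (k + 1) - σ (k - 1)) * u k := by rw [hgn, hun]; ring
      rw [h1, abs_mul, abs_of_nonneg (hεpos k hk1).le]
      have h2 := hubound k
      have h3 := hCbound k hk1
      calc (σ (k + 1) - σ (k - 1)) * |u k| ≤ (C * r ^ k) * (((k : ℝ) + 1) * E) := by
            apply mul_le_mul h3 h2 (abs_nonneg _) (by positivity)
        _ = (C * E) * (((k : ℝ) + 1) * r ^ k) := by ring
  have hgsummable : Summable g := by
    rw [← summable_abs_iff]
    apply Summable.of_nonneg_of_le (fun k => abs_nonneg _) hgabs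
    exact hsummable1.mul_left (C * E)
  set L := ∑' k, g k with hLdef
  have hL : Tendsto (f x) atTop (nhds L) := by
    have h1 : Tendsto (fun n => ∑ k ∈ Finset.range n, g k) atTop (nhds L) :=
      hgsummable.hasSum.tendsto_sum_nat
    have h2 : Tendsto (fun n : ℕ => ∑ k ∈ Finset.range (n + 1), g k) atTop (nhds L) :=
      h1.comp (tendsto_add_atTop_nat 1)
    have h3 : ∀ n : ℕ, ∑ k ∈ Finset.range (n + 1), g k = f x n := by
      intro n
      induction n with
      | zero =>
        rw [hfg]
        simp [hg0]
      | succ n ih =>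
        rw [Finset.sum_range_succ, ih, hfg, hfg,
          Finset.sum_Icc_succ_top (by omega : (1:ℕ) ≤ n + 1)]
    exact Tendsto.congr h3 h2
  have hid2 : ∀ n : ℕ, u (n + 1) = z * (1 - f x n) + z ^ 2 * u n := by
    intro n
    rw [hun, hun, hid n]
    ring
  have hz2le : z ^ 2 ≤ 1 := pow_le_one₀ hzpos.le hzle
  refine ⟨L, hL, ?_, ?_⟩
  · rintro ⟨m, hm⟩
    by_contra hL1
    push_neg at hL1
    have hten : Tendsto (fun n => 1 - f x n) atTop (nhds (1 - L)) := tendsto_const_nhds.sub hL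
    have hev : ∀ᶠ n in atTop, 1 - f x n < (1 - L) / 2 :=
      hten.eventually_lt_const (by linarith)
    obtain ⟨N0, hN0⟩ := eventually_atTop.1 hev
    refine no_neg_drift u (z * ((1 - L) / 2)) ?_ (max N0 m) ?_ ?_
    · exact mul_neg_of_pos_of_neg hzpos (by linarith)
    · intro n hn
      have h1 : 1 - f x n < (1 - L) / 2 := hN0 n (le_trans (le_max_left _ _) hn)
      have h2 : 0 < v x n := hm n (le_trans (le_max_right _ _) hn)
      have h3 : 0 ≤ u n := by
        rw [hun]
        exact (mul_pos h2 (pow_pos hzpos n)).le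
      rw [hid2 n]
      have h4 : z * (1 - f x n) ≤ z * ((1 - L) / 2) :=
        mul_le_mul_of_nonneg_left h1.le hzpos.le
      have h5 : z ^ 2 * u n ≤ u n := by
        have := mul_le_mul_of_nonneg_right hz2le h3
        linarith
      linarith
    · intro n hn
      have h2 := hm n (le_trans (le_max_right _ _) hn)
      rw [hun]
      exact (mul_pos h2 (pow_pos hzpos n)).le
  · rintro ⟨m, hm⟩
    by_contra hL1
    push_neg at hL1
    have hten : Tendsto (fun n => 1 - f x n) atTop (nhds (1 - L)) := tendsto_const_nhds.sub hL
    have hev : ∀ᶠ n in atTop, (1 - L) / 2 < 1 - f x n :=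
      hten.eventually_const_lt (by linarith)
    obtain ⟨N0, hN0⟩ := eventually_atTop.1 hev
    refine no_neg_drift (fun n => -u n) (-(z * ((1 - L) / 2))) ?_ (max N0 m) ?_ ?_
    · have := mul_pos hzpos (show (0:ℝ) < (1 - L) / 2 by linarith)
      linarith
    · intro n hn
      have h1 : (1 - L) / 2 < 1 - f x n := hN0 n (le_trans (le_max_left _ _) hn)
      have h2 : v x n < 0 := hm n (le_trans (le_max_right _ _) hn)
      have h3 : u n ≤ 0 := by
        rw [hun]
        exact (mul_neg_of_neg_of_pos h2 (pow_pos hzpos n)).le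
      show -u (n + 1) ≤ -u n + -(z * ((1 - L) / 2))
      rw [hid2 n]
      have h4 : z * ((1 - L) / 2) ≤ z * (1 - f x n) :=
        mul_le_mul_of_nonneg_left h1.le hzpos.le
      have h5 : u n ≤ z ^ 2 * u n := by
        have := mul_le_mul_of_nonneg_right hz2le (neg_nonneg.2 h3)
        linarith
      linarith
    · intro n hn
      have h2 := hm n (le_trans (le_max_right _ _) hn)
      show (0:ℝ) ≤ -u n
      have h3 : u n ≤ 0 := by
        rw [hun]
        exact (mul_neg_of_neg_of_pos h2 (pow_pos hzpos n)).le
      linarith
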